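/- A Hermitian holomorphic vector bundle (E,h^E) is decomposably non-negative if and only if at every point its Chern curvature matrix with respect to a unitary frame has the form R = −B ∧ B̄ᵀ + A ∧ Āᵀ, where A is an r×N matrix of (1,0)-forms and B is an r×N matrix of (0,1)-forms. -/

import Mathlib

open Finset

/-- Pointwise model of the Chern curvature of a rank-`r` Hermitian bundle over an
`n`-dimensional complex manifold, in a unitary frame: `R i j α β` is the coefficient
`R_{i j̄ α β̄}`. -/
abbrev CurvTensor (n r : ℕ) : Type := Fin r → Fin r → Fin n → Fin n → ℂ

/-- Hermitian symmetry `R_{i j̄ α β̄} = conj (R_{j ī β ᾱ})`. -/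
def IsHermitianCurv {n r : ℕ} (R : CurvTensor n r) : Prop :=
  ∀ i j α β, R i j α β = (starRingEnd ℂ) (R j i β α)

/-- The Nakano quadratic form `R_{i j̄ α β̄} u^{iα} conj (u^{jβ})`. -/
noncomputable def nakanoQ {n r : ℕ} (R : CurvTensor n r) (u : Fin r → Fin n → ℂ) : ℂ :=
  ∑ i, ∑ j, ∑ α, ∑ β, R i j α β * u i α * (starRingEnd ℂ) (u j β)

/-- The dual Nakano quadratic form `R_{i j̄ α β̄} v^{j̄α} conj (v^{īβ})`. -/
noncomputable def dualNakanoQ {n r : ℕ} (R : CurvTensor n r) (v : Fin r → Fin n → ℂ) : ℂ :=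
  ∑ i, ∑ j, ∑ α, ∑ β, R i j α β * v j α * (starRingEnd ℂ) (v i β)

/-- The dual Nakano quadratic form in the type-II convention:
`R_{i j̄ α β̄} v^{i β̄} conj (v^{j ᾱ})`. -/
noncomputable def dualNakanoQ' {n r : ℕ} (R : CurvTensor n r) (v : Fin r → Fin n → ℂ) : ℂ :=
  ∑ i, ∑ j, ∑ α, ∑ β, R i j α β * v i β * (starRingEnd ℂ) (v j α)

/-- The cross curvature term `R_{i j̄ α β̄} u^{iα} conj (v'^{jβ})`. -/
noncomputable def crossQ {n r : ℕ} (R : CurvTensor n r) (u v' : Fin r → Fin n → ℂ) : ℂ :=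
  ∑ i, ∑ j, ∑ α, ∑ β, R i j α β * u i α * (starRingEnd ℂ) (v' j β)

/-- The Griffiths quadratic form `⟨R(v,v̄)ξ,ξ⟩ = R_{i j̄ α β̄} ξ^i conj(ξ^j) v^α conj(v^β)`. -/
noncomputable def griffithsQ {n r : ℕ} (R : CurvTensor n r) (v : Fin n → ℂ)
    (ξ : Fin r → ℂ) : ℂ :=
  ∑ i, ∑ j, ∑ α, ∑ β, R i j α β * ξ i * (starRingEnd ℂ) (ξ j) * v α * (starRingEnd ℂ) (v β)

/-- The curvature has the form `R = −B∧B̄ᵀ + A∧Āᵀ` in a unitary frame, written on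
coefficients: `R_{i j̄ α β̄} = ∑_p A_{jpα} conj(A_{ipβ}) + ∑_p B_{jpβ̄} conj(B_{ipᾱ})`,
where `A` is an `r×N` matrix of `(1,0)`-forms (coefficients `A i p α`) and `B` is an
`r×N` matrix of `(0,1)`-forms (coefficients `B i p α` of `dz̄^α`). -/
def HasDecomp {n r N : ℕ} (R : CurvTensor n r) (A B : Fin r → Fin N → Fin n → ℂ) : Prop :=
  ∀ i j α β, R i j α β =
    (∑ p, A j p α * (starRingEnd ℂ) (A i p β)) + (∑ p, B j p β * (starRingEnd ℂ) (B i p α))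

/-- The `N × (r·n)` coefficient matrix `𝐁 = (B_{i p ᾱ})_{p, (i,α)}` of a matrix of forms. -/
def coeffMat {n r N : ℕ} (B : Fin r → Fin N → Fin n → ℂ) : Matrix (Fin N) (Fin r × Fin n) ℂ :=
  Matrix.of fun p q => B q.1 p q.2

/-- The span of the `(1,0)`-covectors `{A_{ip}}` appearing in `A`. -/
noncomputable def covSpanA {n r N : ℕ} (A : Fin r → Fin N → Fin n → ℂ) : Submodule ℂ (Fin n → ℂ) :=
  Submodule.span ℂ {x | ∃ i p, x = fun α => A i p α}

/-- The span of the `(1,0)`-covectors `{conj B_{ip}}` obtained by conjugating the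
`(0,1)`-forms appearing in `B`. -/
noncomputable def covSpanBbar {n r N : ℕ} (B : Fin r → Fin N → Fin n → ℂ) : Submodule ℂ (Fin n → ℂ) :=
  Submodule.span ℂ {x | ∃ i p, x = fun α => (starRingEnd ℂ) (B i p α)}

/-- Strongly decomposable curvature condition of type I at a point, with the sign of the
quadratic forms prescribed by the predicate `P` (`0 < ·` : positive, `0 ≤ ·` : non-negative,
`· < 0` : negative, `· ≤ 0` : non-positive): there is a decomposition
`T_x^{1,0}X = U ⊕ V` such that the curvature is Nakano `P`-definite on `E⊗U`, dual Nakano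
`P`-definite on `Ē⊗V`, and the cross curvature terms vanish. -/
def TypeIAt {n r : ℕ} (P : ℝ → Prop) (R : CurvTensor n r) : Prop :=
  ∃ U V : Submodule ℂ (Fin n → ℂ), IsCompl U V ∧
    (∀ u : Fin r → Fin n → ℂ, (∀ i, u i ∈ U) → u ≠ 0 →
      ∃ c : ℝ, P c ∧ nakanoQ R u = (c : ℂ)) ∧
    (∀ u v' : Fin r → Fin n → ℂ, (∀ i, u i ∈ U) → (∀ j, v' j ∈ V) → crossQ R u v' = 0) ∧
    (∀ v : Fin r → Fin n → ℂ, (∀ j, v j ∈ V) → v ≠ 0 →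
      ∃ c : ℝ, P c ∧ dualNakanoQ R v = (c : ℂ))

/-- Strongly decomposable curvature condition of type II at a point, with the sign of the
quadratic forms prescribed by the predicate `P`: there is an orthogonal decomposition
`E_x = E₁ ⊕ E₂` making the curvature block diagonal, with the curvature Nakano
`P`-definite on `E₁ ⊗ T^{1,0}` and dual Nakano `P`-definite on `E₂ ⊗ T^{0,1}`. -/
def TypeIIAt {n r : ℕ} (P : ℝ → Prop) (R : CurvTensor n r) : Prop :=
  ∃ E1 E2 : Submodule ℂ (Fin r → ℂ), IsCompl E1 E2 ∧
    (∀ ξ ∈ E1, ∀ η ∈ E2, (∑ i, ξ i * (starRingEnd ℂ) (η i)) = 0) ∧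
    (∀ ξ ∈ E1, ∀ η ∈ E2, ∀ α β,
      (∑ i, ∑ j, R i j α β * ξ i * (starRingEnd ℂ) (η j)) = 0 ∧
      (∑ i, ∑ j, R i j α β * η i * (starRingEnd ℂ) (ξ j)) = 0) ∧
    (∀ u : Fin r → Fin n → ℂ, (∀ α, (fun i => u i α) ∈ E1) → u ≠ 0 →
      ∃ c : ℝ, P c ∧ nakanoQ R u = (c : ℂ)) ∧
    (∀ v : Fin r → Fin n → ℂ, (∀ β, (fun i => v i β) ∈ E2) → v ≠ 0 →
      ∃ c : ℝ, P c ∧ dualNakanoQ' R v = (c : ℂ))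

/-- Decomposable non-negativity at a point (Finski): `(1/2π)⟨R(v,v̄)ξ,ξ⟩` is a finite sum
of squared moduli of sesquilinear forms `l_p` and linear forms `l'_p` in `(v,ξ)`. -/
def DecomposablyNonnegAt {n r : ℕ} (R : CurvTensor n r) : Prop :=
  ∃ (N : ℕ) (l l' : Fin N → Fin n → Fin r → ℂ),
    ∀ (v : Fin n → ℂ) (ξ : Fin r → ℂ),
      (1 / (2 * (Real.pi : ℂ))) * griffithsQ R v ξ =
        (((∑ p, Complex.normSq (∑ α, ∑ i, l p α i * v α * (starRingEnd ℂ) (ξ i)))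
          + ∑ p, Complex.normSq (∑ α, ∑ i, l' p α i * v α * ξ i) : ℝ) : ℂ)

/-- Decomposable positivity at a point: decomposable non-negativity together with the
non-vanishing of `⟨R(v,v̄)ξ,ξ⟩` for `v, ξ ≠ 0`. -/
def DecomposablyPosAt {n r : ℕ} (R : CurvTensor n r) : Prop :=
  DecomposablyNonnegAt R ∧
    ∀ (v : Fin n → ℂ) (ξ : Fin r → ℂ), v ≠ 0 → ξ ≠ 0 → griffithsQ R v ξ ≠ 0

section Aux

private lemma sum_pair_aux {ι : Type*} [Fintype ι] [DecidableEq ι] {a b : ι} (hab : a ≠ b)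
    (f g : ι → ℂ) :
    (∑ x, if x = a then f x else if x = b then g x else 0) = f a + g b := by
  have hx : ∀ x, (if x = a then f x else if x = b then g x else 0)
      = (if x = a then f x else 0) + (if x = b then g x else 0) := by
    intro x
    rcases eq_or_ne x a with rfl | h1
    · simp [hab]
    · simp [h1]
  simp [hx, Finset.sum_add_distrib, Finset.sum_ite_eq']

private lemma sesq_eq_zero_aux {ι : Type*} [Fintype ι] [DecidableEq ι] (M : ι → ι → ℂ)
    (h : ∀ v : ι → ℂ, ∑ a, ∑ b, M a b * v a * (starRingEnd ℂ) (v b) = 0) (a b : ι) :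
    M a b = 0 := by
  have hdiag : ∀ c : ι, M c c = 0 := by
    intro c
    have := h (fun x => if x = c then 1 else 0)
    simpa [mul_ite, ite_mul, Finset.sum_ite_eq'] using this
  rcases eq_or_ne a b with rfl | hab
  · exact hdiag a
  · have key : ∀ t : ℂ, (starRingEnd ℂ) t * M a b + t * M b a = 0 := by
      intro t
      have h0 := h (fun x => if x = a then 1 else if x = b then t else 0)
      simp only [apply_ite (starRingEnd ℂ), map_one, map_zero, mul_ite, ite_mul, mul_zero,
        zero_mul, mul_one, one_mul] at h0
      rw [Finset.sum_congr rfl (fun x _ => sum_pair_aux hab _ _), Finset.sum_add_distrib,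
        sum_pair_aux hab, sum_pair_aux hab, hdiag a, hdiag b] at h0
      linear_combination h0
    have k1 := key 1
    have k2 := key Complex.I
    simp only [map_one, one_mul, Complex.conj_I] at k1 k2
    linear_combination k1 / 2 + Complex.I / 2 * k2 + ((M a b - M b a) / 2) * Complex.I_sq

private lemma curv_ext_aux {n r : ℕ} (R R' : CurvTensor n r)
    (h : ∀ v ξ, griffithsQ R v ξ = griffithsQ R' v ξ) : R = R' := by
  have h1 : ∀ (v : Fin n → ℂ) (i j : Fin r),
      ∑ α, ∑ β, (R i j α β - R' i j α β) * v α * (starRingEnd ℂ) (v β) = 0 := by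
    intro v i j
    refine sesq_eq_zero_aux
      (fun i j => ∑ α, ∑ β, (R i j α β - R' i j α β) * v α * (starRingEnd ℂ) (v β)) ?_ i j
    intro ξ
    have hQ : griffithsQ R v ξ - griffithsQ R' v ξ = 0 := by rw [h v ξ]; ring
    calc ∑ i, ∑ j, (∑ α, ∑ β, (R i j α β - R' i j α β) * v α * (starRingEnd ℂ) (v β))
            * ξ i * (starRingEnd ℂ) (ξ j)
        = griffithsQ R v ξ - griffithsQ R' v ξ := by
          unfold griffithsQ
          simp only [Finset.sum_mul, sub_mul, ← Finset.sum_sub_distrib]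
          exact Finset.sum_congr rfl fun i _ => Finset.sum_congr rfl fun j _ =>
            Finset.sum_congr rfl fun α _ => Finset.sum_congr rfl fun β _ => by ring
      _ = 0 := hQ
  funext i j α β
  exact sub_eq_zero.mp
    (sesq_eq_zero_aux (fun α β => R i j α β - R' i j α β) (fun v => h1 v i j) α β)

private lemma sum5_comm_a {M : Type*} [AddCommMonoid M] {ι₁ ι₂ ι₃ ι₄ ι₅ : Type*}
    [Fintype ι₁] [Fintype ι₂] [Fintype ι₃] [Fintype ι₄] [Fintype ι₅]
    (f : ι₁ → ι₂ → ι₃ → ι₄ → ι₅ → M) :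
    ∑ a, ∑ b, ∑ c, ∑ d, ∑ e, f a b c d e = ∑ e, ∑ d, ∑ b, ∑ c, ∑ a, f a b c d e := by
  have h1 : ∑ x : ι₁ × ι₂ × ι₃ × ι₄ × ι₅, f x.1 x.2.1 x.2.2.1 x.2.2.2.1 x.2.2.2.2
      = ∑ a, ∑ b, ∑ c, ∑ d, ∑ e, f a b c d e := by
    simp only [Fintype.sum_prod_type]
  have h2 : ∑ y : ι₅ × ι₄ × ι₂ × ι₃ × ι₁, f y.2.2.2.2 y.2.2.1 y.2.2.2.1 y.2.1 y.1
      = ∑ e, ∑ d, ∑ b, ∑ c, ∑ a, f a b c d e := by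
    simp only [Fintype.sum_prod_type]
  rw [← h1, ← h2]
  exact Fintype.sum_equiv
    ⟨fun x => (x.2.2.2.2, x.2.2.2.1, x.2.1, x.2.2.1, x.1),
     fun y => (y.2.2.2.2, y.2.2.1, y.2.2.2.1, y.2.1, y.1),
     fun ⟨a,b,c,d,e⟩ => rfl, fun ⟨e,d,b,c,a⟩ => rfl⟩ _ _ (fun ⟨a,b,c,d,e⟩ => rfl)

private lemma sum5_comm_b {M : Type*} [AddCommMonoid M] {ι₁ ι₂ ι₃ ι₄ ι₅ : Type*}
    [Fintype ι₁] [Fintype ι₂] [Fintype ι₃] [Fintype ι₄] [Fintype ι₅]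
    (f : ι₁ → ι₂ → ι₃ → ι₄ → ι₅ → M) :
    ∑ a, ∑ b, ∑ c, ∑ d, ∑ e, f a b c d e = ∑ e, ∑ d, ∑ a, ∑ c, ∑ b, f a b c d e := by
  have h1 : ∑ x : ι₁ × ι₂ × ι₃ × ι₄ × ι₅, f x.1 x.2.1 x.2.2.1 x.2.2.2.1 x.2.2.2.2
      = ∑ a, ∑ b, ∑ c, ∑ d, ∑ e, f a b c d e := by
    simp only [Fintype.sum_prod_type]
  have h2 : ∑ y : ι₅ × ι₄ × ι₁ × ι₃ × ι₂, f y.2.2.1 y.2.2.2.2 y.2.2.2.1 y.2.1 y.1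
      = ∑ e, ∑ d, ∑ a, ∑ c, ∑ b, f a b c d e := by
    simp only [Fintype.sum_prod_type]
  rw [← h1, ← h2]
  exact Fintype.sum_equiv
    ⟨fun x => (x.2.2.2.2, x.2.2.2.1, x.1, x.2.2.1, x.2.1),
     fun y => (y.2.2.1, y.2.2.2.2, y.2.2.2.1, y.2.1, y.1),
     fun ⟨a,b,c,d,e⟩ => rfl, fun ⟨e,d,a,c,b⟩ => rfl⟩ _ _ (fun ⟨a,b,c,d,e⟩ => rfl)

private lemma griffithsQ_hasDecomp_aux {n r N : ℕ} (R : CurvTensor n r)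
    (A B : Fin r → Fin N → Fin n → ℂ) (h : HasDecomp R A B) (v : Fin n → ℂ) (ξ : Fin r → ℂ) :
    griffithsQ R v ξ =
      ((∑ p, Complex.normSq (∑ α, ∑ i, A i p α * v α * (starRingEnd ℂ) (ξ i))
        + ∑ p, Complex.normSq (∑ α, ∑ i, (starRingEnd ℂ) (B i p α) * v α * ξ i) : ℝ) : ℂ) := by
  unfold HasDecomp at h
  push_cast [← Complex.mul_conj]
  unfold griffithsQ
  simp only [h, add_mul, Finset.sum_add_distrib, Finset.sum_mul, map_sum, map_mul,
    Complex.conj_conj, Finset.mul_sum]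
  congr 1
  · rw [sum5_comm_b]
    refine Finset.sum_congr rfl fun p _ => Finset.sum_congr rfl fun β _ =>
      Finset.sum_congr rfl fun j _ => Finset.sum_congr rfl fun α _ =>
      Finset.sum_congr rfl fun i _ => by ring
  · rw [sum5_comm_a]
    refine Finset.sum_congr rfl fun p _ => Finset.sum_congr rfl fun β _ =>
      Finset.sum_congr rfl fun j _ => Finset.sum_congr rfl fun α _ =>
      Finset.sum_congr rfl fun i _ => by ring

private lemma hasDecomp_mk {n r N : ℕ} (A B : Fin r → Fin N → Fin n → ℂ) :
    HasDecomp (fun i j α β =>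
      (∑ p, A j p α * (starRingEnd ℂ) (A i p β))
        + (∑ p, B j p β * (starRingEnd ℂ) (B i p α))) A B :=
  fun _ _ _ _ => rfl

end Aux

private lemma decomp_of_griffith {n r N : ℕ} (R0 : CurvTensor n r)
    (A B : Fin r → Fin N → Fin n → ℂ)
    (h : ∀ (v : Fin n → ℂ) (ξ : Fin r → ℂ), griffithsQ R0 v ξ =
      ((∑ p, Complex.normSq (∑ α, ∑ i, A i p α * v α * (starRingEnd ℂ) (ξ i))
        + ∑ p, Complex.normSq (∑ α, ∑ i, (starRingEnd ℂ) (B i p α) * v α * ξ i) : ℝ) : ℂ)) :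
    HasDecomp R0 A B := by
  have hEq : R0 = (fun i j α β =>
      (∑ p, A j p α * (starRingEnd ℂ) (A i p β))
        + (∑ p, B j p β * (starRingEnd ℂ) (B i p α))) :=
    curv_ext_aux _ _ (fun v ξ => by
      rw [h v ξ, griffithsQ_hasDecomp_aux _ A B (hasDecomp_mk A B) v ξ])
  exact hEq ▸ hasDecomp_mk A B


/-- a Hermitian holomorphic vector bundle (modelled by
its family of pointwise curvature tensors in unitary frames) is decomposably non-negative
iff at every point the Chern curvature matrix has the form `R = −B∧B̄ᵀ + A∧Āᵀ` with `A`
an `r×N` matrix of `(1,0)`-forms and `B` an `r×N` matrix of `(0,1)`-forms. -/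
theorem decomposablyNonneg_iff_hasDecomp {n r : ℕ} {X : Type*}
    (R : X → CurvTensor n r) (hH : ∀ x, IsHermitianCurv (R x)) :
    (∀ x, DecomposablyNonnegAt (R x)) ↔
      (∀ x, ∃ (N : ℕ) (A B : Fin r → Fin N → Fin n → ℂ), HasDecomp (R x) A B) := by
  have hπ : (0:ℝ) < 2 * Real.pi := by positivity
  have hπc : (Real.pi : ℂ) ≠ 0 := Complex.ofReal_ne_zero.mpr Real.pi_ne_zero
  set c : ℝ := Real.sqrt (2 * Real.pi) with hc
  have hcc : c * c = 2 * Real.pi := Real.mul_self_sqrt hπ.le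
  have hnormc : Complex.normSq (c:ℂ) = 2 * Real.pi := by
    rw [Complex.normSq_ofReal, hcc]
  constructor
  · intro h x
    obtain ⟨N, l, l', hl⟩ := h x
    refine ⟨N, fun i p α => (c:ℂ) * l p α i,
      fun i p α => (c:ℂ) * (starRingEnd ℂ) (l' p α i), ?_⟩
    apply decomp_of_griffith
    intro v ξ
    have s1 : ∀ p, (∑ α, ∑ i, ((c:ℂ) * l p α i) * v α * (starRingEnd ℂ) (ξ i))
        = (c:ℂ) * ∑ α, ∑ i, l p α i * v α * (starRingEnd ℂ) (ξ i) := by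
      intro p
      rw [Finset.mul_sum]
      exact Finset.sum_congr rfl fun α _ => by
        rw [Finset.mul_sum]; exact Finset.sum_congr rfl fun i _ => by ring
    have s2 : ∀ p, (∑ α, ∑ i,
          (starRingEnd ℂ) ((c:ℂ) * (starRingEnd ℂ) (l' p α i)) * v α * ξ i)
        = (c:ℂ) * ∑ α, ∑ i, l' p α i * v α * ξ i := by
      intro p
      rw [Finset.mul_sum]
      exact Finset.sum_congr rfl fun α _ => by
        rw [Finset.mul_sum]
        exact Finset.sum_congr rfl fun i _ => by
          simp only [map_mul, Complex.conj_conj, Complex.conj_ofReal]; ring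
    simp only [s1, s2, Complex.normSq_mul, hnormc]
    rw [← Finset.mul_sum, ← Finset.mul_sum]
    have hl' := hl v ξ
    field_simp at hl'
    push_cast at hl' ⊢
    linear_combination hl'
  · intro h x
    obtain ⟨N, A, B, hD⟩ := h x
    refine ⟨N, fun p α i => (c:ℂ)⁻¹ * A i p α,
      fun p α i => (c:ℂ)⁻¹ * (starRingEnd ℂ) (B i p α), ?_⟩
    intro v ξ
    rw [griffithsQ_hasDecomp_aux _ A B hD v ξ]
    have s1 : ∀ p, (∑ α, ∑ i, ((c:ℂ)⁻¹ * A i p α) * v α * (starRingEnd ℂ) (ξ i))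
        = (c:ℂ)⁻¹ * ∑ α, ∑ i, A i p α * v α * (starRingEnd ℂ) (ξ i) := by
      intro p
      rw [Finset.mul_sum]
      exact Finset.sum_congr rfl fun α _ => by
        rw [Finset.mul_sum]; exact Finset.sum_congr rfl fun i _ => by ring
    have s2 : ∀ p, (∑ α, ∑ i, ((c:ℂ)⁻¹ * (starRingEnd ℂ) (B i p α)) * v α * ξ i)
        = (c:ℂ)⁻¹ * ∑ α, ∑ i, (starRingEnd ℂ) (B i p α) * v α * ξ i := by
      intro p
      rw [Finset.mul_sum]
      exact Finset.sum_congr rfl fun α _ => by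
        rw [Finset.mul_sum]; exact Finset.sum_congr rfl fun i _ => by ring
    simp only [s1, s2, Complex.normSq_mul, Complex.normSq_inv, hnormc]
    rw [← Finset.mul_sum, ← Finset.mul_sum]
    push_cast
    have h2π : (2 * (Real.pi:ℂ)) ≠ 0 := by
      simp [hπc]
    field_simp
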